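/- Let π=⟨v_0,…,v_k⟩ (k ≥ 1) be a path in a task-assistance instance with ℓ_π(v_k) ≤ 1 (so that at least one timing profile for π exists). Then there exists a timing profile T* = ⟨t*_0,…,t*_{k−1}⟩ for π such that t*_i ∈ ct_i for every 0 ≤ i ≤ k−1 and R(π,T*) ≥ R(π,T) for every timing profile T for π; i.e., an optimal timing profile exists all of whose timestamps are vertex-critical times. -/

import Mathlib

open MeasureTheory
open scoped Classical

/-- A task-assistance instance: a directed graph on vertex type `V` with
nonnegative edge lengths and, for each vertex, a finite set of closed
subintervals of `[0,1]` (an interval is encoded as a pair `(t_s, t_e)`). -/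
structure TAI (V : Type) where
  E : V → V → Prop
  len : V → V → ℝ
  len_nonneg : ∀ u v, 0 ≤ len u v
  I : V → Finset (ℝ × ℝ)
  I_valid : ∀ v p, p ∈ I v → 0 ≤ p.1 ∧ p.1 ≤ p.2 ∧ p.2 ≤ 1

/-- `v 0, v 1, …, v k` is a path in `G`. -/
def IsPath {V : Type} (G : TAI V) (v : ℕ → V) (k : ℕ) : Prop :=
  ∀ i, i < k → G.E (v i) (v (i + 1))

/-- `ℓ_π(v_i)`: length of the path from `v 0` to `v i`. -/
noncomputable def pathLen {V : Type} (G : TAI V) (v : ℕ → V) (i : ℕ) : ℝ :=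
  ∑ j ∈ Finset.range i, G.len (v j) (v (j + 1))

/-- `ℓ⁺_π(v_i)`: length from `v 0` to the middle of the outgoing edge of `v i`
(with the convention `ℓ(v_k, v_{k+1}) = 0`). -/
noncomputable def ellPlus {V : Type} (G : TAI V) (v : ℕ → V) (k i : ℕ) : ℝ :=
  pathLen G v i + (if i < k then G.len (v i) (v (i + 1)) / 2 else 0)

/-- `ℓ⁻_π(v_i)`: length from `v 0` to the middle of the incoming edge of `v i`
(with the convention `ℓ(v_{-1}, v_0) = 0`). -/
noncomputable def ellMinus {V : Type} (G : TAI V) (v : ℕ → V) (i : ℕ) : ℝ :=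
  pathLen G v i - (if i = 0 then 0 else G.len (v (i - 1)) (v i) / 2)

/-- The interval family along the path, augmented with the degenerate interval
`[ℓ⁺(v_0), ℓ⁺(v_0)]` at index `0` and
`[1 - (ℓ⁺(v_k) - ℓ⁺(v_{k-1})), 1 - (ℓ⁺(v_k) - ℓ⁺(v_{k-1}))]` at index `k`. -/
noncomputable def augI {V : Type} (G : TAI V) (v : ℕ → V) (k i : ℕ) : Finset (ℝ × ℝ) :=
  if i = 0 then insert (ellPlus G v k 0, ellPlus G v k 0) (G.I (v 0))
  else if i = k then
    insert (1 - (ellPlus G v k k - ellPlus G v k (k - 1)),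
            1 - (ellPlus G v k k - ellPlus G v k (k - 1))) (G.I (v k))
  else G.I (v i)

/-- Type-T1 vertex-pair critical times of `ct(v_a, v_b)`: for each interval
`[t_s, t_e]` of `v_a`, the time `t_e`. -/
def ctT1 {V : Type} (G : TAI V) (v : ℕ → V) (k a : ℕ) : Set ℝ :=
  {t | ∃ p ∈ augI G v k a, t = p.2}

/-- Type-T2 vertex-pair critical times of `ct(v_a, v_b)`: for each interval
`[t_s, t_e]` of `v_b`, the time `t_s - (ℓ⁻(v_b) - ℓ⁺(v_a))`. -/
def ctT2 {V : Type} (G : TAI V) (v : ℕ → V) (k a b : ℕ) : Set ℝ :=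
  {t | ∃ p ∈ augI G v k b, t = p.1 - (ellMinus G v b - ellPlus G v k a)}

/-- Vertex-pair critical times `ct(v_a, v_b)`. -/
def ctPair {V : Type} (G : TAI V) (v : ℕ → V) (k a b : ℕ) : Set ℝ :=
  ctT1 G v k a ∪ ctT2 G v k a b

/-- Vertex-critical times `ct_i = ⋃_{a<b≤k} { t + ℓ⁺(v_i) - ℓ⁺(v_a) : t ∈ ct(v_a, v_b) }`. -/
def ctVert {V : Type} (G : TAI V) (v : ℕ → V) (k i : ℕ) : Set ℝ :=
  ⋃ (a : ℕ) (b : ℕ) (_ : a < b) (_ : b ≤ k),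
    (fun t => t + (ellPlus G v k i - ellPlus G v k a)) '' ctPair G v k a b

/-- `T 0, …, T (k-1)` is a timing profile for the path `v 0, …, v k`:
`T 0 ≥ ℓ⁺(v_0)`, `T (i+1) ≥ T i + ℓ⁺(v_i, v_{i+1})` for `0 ≤ i ≤ k-2`, and
`T (k-1) + ℓ⁺(v_{k-1}, v_k) ≤ 1`. -/
def IsTP {V : Type} (G : TAI V) (v : ℕ → V) (k : ℕ) (T : ℕ → ℝ) : Prop :=
  (1 ≤ k → ellPlus G v k 0 ≤ T 0) ∧
  (∀ i, i + 2 ≤ k → T i + (ellPlus G v k (i + 1) - ellPlus G v k i) ≤ T (i + 1)) ∧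
  (1 ≤ k → T (k - 1) + (ellPlus G v k k - ellPlus G v k (k - 1)) ≤ 1)

/-- Reward at a vertex `u` between times `t` and `t'`:
`R(u, t, t') = Σ_{I ∈ 𝓘(u)} λ([t,t'] ∩ I)`. -/
noncomputable def vReward {V : Type} (G : TAI V) (u : V) (t t' : ℝ) : ℝ :=
  ∑ p ∈ G.I u, (volume (Set.Icc t t' ∩ Set.Icc p.1 p.2)).toReal

/-- Reward of a timing profile: `R(π, T) = Σ_{i=0}^{k} R(v_i, t_{i-1}, t_i)`
with the conventions `t_{-1} = 0` and `t_k = 1`. -/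
noncomputable def profReward {V : Type} (G : TAI V) (v : ℕ → V) (k : ℕ) (T : ℕ → ℝ) : ℝ :=
  ∑ i ∈ Finset.range (k + 1),
    vReward G (v i) (if i = 0 then 0 else T (i - 1)) (if i = k then 1 else T i)

section Helpers


lemma convexOn_congrOn {s : Set ℝ} {f g : ℝ → ℝ} (hs : Convex ℝ s)
    (h : ∀ x ∈ s, f x = g x) (hg : ConvexOn ℝ s g) : ConvexOn ℝ s f := by
  refine ⟨hs, fun x hx y hy a b ha hb hab => ?_⟩
  have hxy : a • x + b • y ∈ s := hs hx hy ha hb hab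
  rw [h _ hxy, h _ hx, h _ hy]
  exact hg.2 hx hy ha hb hab

lemma convexOn_affine_max0 {s : Set ℝ} (hs : Convex ℝ s) (A B : ℝ) :
    ConvexOn ℝ s fun d => max (A * d + B) 0 := by
  refine ⟨hs, fun x _ y _ a b ha hb hab => ?_⟩
  simp only [smul_eq_mul]
  refine max_le ?_ ?_
  · have h1 : A * (a * x + b * y) + B = a * (A * x + B) + b * (A * y + B) := by
      have hb' : b = 1 - a := by linarith
      subst hb'; ring
    rw [h1]
    have := le_max_left (A * x + B) (0:ℝ)
    have := le_max_left (A * y + B) (0:ℝ)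
    nlinarith
  · have := le_max_right (A * x + B) (0:ℝ)
    have := le_max_right (A * y + B) (0:ℝ)
    nlinarith

lemma convexOn_Icc_le_max {d1 d2 : ℝ} {f : ℝ → ℝ} (hf : ConvexOn ℝ (Set.Icc d1 d2) f)
    {c : ℝ} (h1 : d1 ≤ c) (h2 : c ≤ d2) : f c ≤ max (f d1) (f d2) := by
  rcases eq_or_lt_of_le (h1.trans h2) with h | h
  · have : c = d1 := le_antisymm (h ▸ h2) h1
    subst this; exact le_max_left _ _
  · have hd : 0 < d2 - d1 := by linarith
    set a := (d2 - c) / (d2 - d1) with ha_def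
    set b := (c - d1) / (d2 - d1) with hb_def
    have ha : 0 ≤ a := div_nonneg (by linarith) hd.le
    have hb : 0 ≤ b := div_nonneg (by linarith) hd.le
    have hab : a + b = 1 := by rw [ha_def, hb_def]; field_simp; ring
    have hc : a • d1 + b • d2 = c := by
      simp only [smul_eq_mul]
      rw [ha_def, hb_def]
      field_simp
      ring
    have := hf.2 (Set.left_mem_Icc.2 (by linarith)) (Set.right_mem_Icc.2 (by linarith)) ha hb hab
    rw [hc] at this
    simp only [smul_eq_mul] at this
    refine this.trans ?_
    have h3 : f d1 ≤ max (f d1) (f d2) := le_max_left _ _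
    have h4 : f d2 ≤ max (f d1) (f d2) := le_max_right _ _
    have h5 : a * max (f d1) (f d2) + b * max (f d1) (f d2) = max (f d1) (f d2) := by
      rw [← add_mul, hab, one_mul]
    have h6 := mul_le_mul_of_nonneg_left h3 ha
    have h7 := mul_le_mul_of_nonneg_left h4 hb
    linarith

lemma convexOn_finset_sum {ι : Type*} {s : Set ℝ} (hs : Convex ℝ s) (t : Finset ι)
    (f : ι → ℝ → ℝ) (h : ∀ i ∈ t, ConvexOn ℝ s (f i)) :
    ConvexOn ℝ s (fun d => ∑ i ∈ t, f i d) := by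
  classical
  induction t using Finset.induction_on with
  | empty => simpa using convexOn_const (0:ℝ) hs
  | insert a t' hx ih =>
      have h1 : ConvexOn ℝ s (f a) := h a (Finset.mem_insert_self _ _)
      have h2 : ConvexOn ℝ s (fun d => ∑ i ∈ t', f i d) :=
        ih fun i hi => h i (Finset.mem_insert_of_mem hi)
      have := h1.add h2
      refine convexOn_congrOn hs (fun x _ => ?_) this
      simp [Finset.sum_insert hx]

lemma min_aff {d1 d2 c e : ℝ} (h12 : d1 ≤ d2) (hβ : e - c ∉ Set.Ioo d1 d2) :
    ∃ A B : ℝ, ∀ d ∈ Set.Icc d1 d2, min (d + c) e = A * d + B := by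
  rcases not_and_or.mp (fun hand => hβ ⟨hand.1, hand.2⟩) with h | h
  · push_neg at h
    exact ⟨0, e, fun d hd => by
      rw [min_eq_right (by have := hd.1; linarith), zero_mul, zero_add]⟩
  · push_neg at h
    exact ⟨1, c, fun d hd => by
      rw [min_eq_left (by have := hd.2; linarith), one_mul]⟩

lemma max_aff {d1 d2 c e : ℝ} (h12 : d1 ≤ d2) (hβ : e - c ∉ Set.Ioo d1 d2) :
    ∃ A B : ℝ, ∀ d ∈ Set.Icc d1 d2, max (d + c) e = A * d + B := by
  rcases not_and_or.mp (fun hand => hβ ⟨hand.1, hand.2⟩) with h | h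
  · push_neg at h
    exact ⟨1, c, fun d hd => by
      rw [max_eq_left (by have := hd.1; linarith), one_mul]⟩
  · push_neg at h
    exact ⟨0, e, fun d hd => by
      rw [max_eq_right (by have := hd.2; linarith), zero_mul, zero_add]⟩


end Helpers

section Main


variable {V : Type}

lemma pathLen_succ (G : TAI V) (v : ℕ → V) (j : ℕ) :
    pathLen G v (j + 1) = pathLen G v j + G.len (v j) (v (j + 1)) :=
  Finset.sum_range_succ _ _

lemma ellPlus_top (G : TAI V) (v : ℕ → V) (k : ℕ) : ellPlus G v k k = pathLen G v k := by
  simp [ellPlus]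

lemma ellMinus_eq (G : TAI V) (v : ℕ → V) {k b : ℕ} (hb1 : 1 ≤ b) (hbk : b ≤ k) :
    ellMinus G v b = ellPlus G v k (b - 1) := by
  obtain ⟨j, rfl⟩ : ∃ j, b = j + 1 := ⟨b - 1, by omega⟩
  have hjk : j < k := by omega
  simp only [ellMinus, ellPlus, Nat.add_sub_cancel, Nat.succ_ne_zero, if_false, if_pos hjk,
    pathLen_succ]
  ring

lemma GI_subset_augI (G : TAI V) (v : ℕ → V) (k m : ℕ) :
    G.I (v m) ⊆ augI G v k m := by
  unfold augI
  split_ifs with h h'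
  · subst h; exact Finset.subset_insert _ _
  · subst h'; exact Finset.subset_insert _ _
  · exact Finset.Subset.refl _

/-- The set of critical slack values. -/
noncomputable def CSF (G : TAI V) (v : ℕ → V) (k : ℕ) : Finset ℝ :=
  ((Finset.range k).biUnion fun a => (augI G v k a).image fun p => p.2 - ellPlus G v k a) ∪
  ((Finset.Icc 1 k).biUnion fun b => (augI G v k b).image fun p => p.1 - ellPlus G v k (b - 1))

lemma mem_CSF_T1 (G : TAI V) (v : ℕ → V) {k a : ℕ} (ha : a < k) {p : ℝ × ℝ}
    (hp : p ∈ augI G v k a) : p.2 - ellPlus G v k a ∈ CSF G v k := by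
  refine Finset.mem_union_left _ (Finset.mem_biUnion.2 ⟨a, Finset.mem_range.2 ha, ?_⟩)
  exact Finset.mem_image.2 ⟨p, hp, rfl⟩

lemma mem_CSF_T2 (G : TAI V) (v : ℕ → V) {k b : ℕ} (hb1 : 1 ≤ b) (hbk : b ≤ k) {p : ℝ × ℝ}
    (hp : p ∈ augI G v k b) : p.1 - ellPlus G v k (b - 1) ∈ CSF G v k := by
  refine Finset.mem_union_right _ (Finset.mem_biUnion.2 ⟨b, Finset.mem_Icc.2 ⟨hb1, hbk⟩, ?_⟩)
  exact Finset.mem_image.2 ⟨p, hp, rfl⟩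

lemma zero_mem_CSF (G : TAI V) (v : ℕ → V) {k : ℕ} (hk : 1 ≤ k) : (0:ℝ) ∈ CSF G v k := by
  have hp : ((ellPlus G v k 0, ellPlus G v k 0) : ℝ × ℝ) ∈ augI G v k 0 := by
    simp [augI]
  have := mem_CSF_T1 G v hk hp
  simpa using this

lemma top_mem_CSF (G : TAI V) (v : ℕ → V) {k : ℕ} (hk : 1 ≤ k) :
    1 - ellPlus G v k k ∈ CSF G v k := by
  have hk0 : k ≠ 0 := by omega
  have hp : ((1 - (ellPlus G v k k - ellPlus G v k (k - 1)),
      1 - (ellPlus G v k k - ellPlus G v k (k - 1))) : ℝ × ℝ) ∈ augI G v k k := by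
    simp [augI, hk0]
  have := mem_CSF_T2 G v hk le_rfl hp
  have heq : (1 - (ellPlus G v k k - ellPlus G v k (k - 1))) - ellPlus G v k (k - 1)
      = 1 - ellPlus G v k k := by ring
  rwa [heq] at this

lemma crit_of_CSF (G : TAI V) (v : ℕ → V) {k : ℕ} {c : ℝ} (hc : c ∈ CSF G v k)
    {i : ℕ} (hi : i < k) : ellPlus G v k i + c ∈ ctVert G v k i := by
  rcases Finset.mem_union.mp hc with h | h
  · obtain ⟨a, ha, h⟩ := Finset.mem_biUnion.mp h
    obtain ⟨p, hp, rfl⟩ := Finset.mem_image.mp h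
    have ha' : a < k := Finset.mem_range.mp ha
    refine Set.mem_iUnion.2 ⟨a, Set.mem_iUnion.2 ⟨k, Set.mem_iUnion.2 ⟨ha',
      Set.mem_iUnion.2 ⟨le_rfl, ?_⟩⟩⟩⟩
    exact ⟨p.2, Or.inl ⟨p, hp, rfl⟩, by ring⟩
  · obtain ⟨b, hb, h⟩ := Finset.mem_biUnion.mp h
    obtain ⟨p, hp, rfl⟩ := Finset.mem_image.mp h
    obtain ⟨hb1, hbk⟩ := Finset.mem_Icc.mp hb
    refine Set.mem_iUnion.2 ⟨b - 1, Set.mem_iUnion.2 ⟨b, Set.mem_iUnion.2 ⟨by omega,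
      Set.mem_iUnion.2 ⟨hbk, ?_⟩⟩⟩⟩
    refine ⟨p.1 - (ellMinus G v b - ellPlus G v k (b - 1)), Or.inr ⟨p, hp, rfl⟩, ?_⟩
    rw [ellMinus_eq G v hb1 hbk]
    ring


/-- Feasibility of a slack vector. -/
def Feas (G : TAI V) (v : ℕ → V) (k : ℕ) (s : ℕ → ℝ) : Prop :=
  0 ≤ s 0 ∧ (∀ i, i + 2 ≤ k → s i ≤ s (i + 1)) ∧ s (k - 1) ≤ 1 - ellPlus G v k k

lemma feas_of_isTP (G : TAI V) (v : ℕ → V) {k : ℕ} (hk : 1 ≤ k) {T : ℕ → ℝ}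
    (h : IsTP G v k T) : Feas G v k (fun i => T i - ellPlus G v k i) := by
  refine ⟨by have := h.1 hk; simp; linarith, fun i hi => by have := h.2.1 i hi; simp; linarith,
    by have := h.2.2 hk; simp; linarith⟩

lemma isTP_of_feas (G : TAI V) (v : ℕ → V) {k : ℕ} {s : ℕ → ℝ}
    (h : Feas G v k s) : IsTP G v k (fun i => ellPlus G v k i + s i) := by
  refine ⟨fun _ => by have := h.1; simp; linarith, fun i hi => by have := h.2.1 i hi; simp; linarith,
    fun _ => by have := h.2.2; simp; linarith⟩

lemma feas_mono (G : TAI V) (v : ℕ → V) {k : ℕ} {s : ℕ → ℝ} (hs : Feas G v k s)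
    {i j : ℕ} (hij : i ≤ j) (hjk : j + 1 ≤ k) : s i ≤ s j := by
  induction j, hij using Nat.le_induction with
  | base => exact le_rfl
  | succ n hn ih =>
      exact (ih (by omega)).trans (hs.2.1 n (by omega))

lemma feas_nonneg (G : TAI V) (v : ℕ → V) {k : ℕ} {s : ℕ → ℝ} (hs : Feas G v k s)
    {i : ℕ} (hi : i < k) : 0 ≤ s i :=
  hs.1.trans (feas_mono G v hs (Nat.zero_le _) (by omega))

lemma feas_le_top (G : TAI V) (v : ℕ → V) {k : ℕ} {s : ℕ → ℝ} (hs : Feas G v k s)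
    {i : ℕ} (hi : i < k) : s i ≤ 1 - ellPlus G v k k :=
  (feas_mono G v hs (by omega : i ≤ k - 1) (by omega)).trans hs.2.2

lemma vReward_eq (G : TAI V) (u : V) (x y : ℝ) :
    vReward G u x y = ∑ p ∈ G.I u, max (min y p.2 - max x p.1) 0 := by
  unfold vReward
  refine Finset.sum_congr rfl fun p _ => ?_
  rw [Set.Icc_inter_Icc, Real.volume_Icc, ENNReal.toReal_ofReal']

/-- Reward as a function of the slack vector. -/
noncomputable def RW (G : TAI V) (v : ℕ → V) (k : ℕ) (s : ℕ → ℝ) : ℝ :=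
  profReward G v k (fun i => ellPlus G v k i + s i)

lemma profReward_congr (G : TAI V) (v : ℕ → V) (k : ℕ) {T T' : ℕ → ℝ}
    (h : ∀ i, i < k → T i = T' i) : profReward G v k T = profReward G v k T' := by
  unfold profReward
  refine Finset.sum_congr rfl fun m hm => ?_
  have hm' : m ≤ k := by
    have := Finset.mem_range.mp hm; omega
  congr 1
  · split_ifs with h0
    · rfl
    · exact h _ (by omega)
  · split_ifs with h0
    · rfl
    · exact h _ (by omega)

lemma RW_congr (G : TAI V) (v : ℕ → V) (k : ℕ) {s s' : ℕ → ℝ}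
    (h : ∀ i, i < k → s i = s' i) : RW G v k s = RW G v k s' :=
  profReward_congr G v k fun i hi => by rw [h i hi]

lemma main_move (G : TAI V) (v : ℕ → V) {k : ℕ} (hk : 1 ≤ k) :
    ∀ (n : ℕ) (s : ℕ → ℝ), Feas G v k s →
      (((Finset.range k).image s) \ CSF G v k).card ≤ n →
      ∃ s', Feas G v k s' ∧ (∀ i, i < k → s' i ∈ CSF G v k) ∧ RW G v k s ≤ RW G v k s' := by
  intro n
  induction n with
  | zero =>
      intro s hs hcard
      refine ⟨s, hs, fun i hi => ?_, le_rfl⟩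
      by_contra hni
      have hmem : s i ∈ (Finset.range k).image s \ CSF G v k :=
        Finset.mem_sdiff.2 ⟨Finset.mem_image_of_mem s (Finset.mem_range.2 hi), hni⟩
      have := Finset.card_pos.2 ⟨_, hmem⟩
      omega
  | succ n ih =>
      intro s hs hcard
      rcases Finset.eq_empty_or_nonempty ((Finset.range k).image s \ CSF G v k) with
        hemp | ⟨c0, hc0mem⟩
      · refine ⟨s, hs, fun i hi => ?_, le_rfl⟩
        by_contra hni
        have hmem : s i ∈ (Finset.range k).image s \ CSF G v k :=
          Finset.mem_sdiff.2 ⟨Finset.mem_image_of_mem s (Finset.mem_range.2 hi), hni⟩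
        rw [hemp] at hmem
        exact absurd hmem (Finset.notMem_empty _)
      obtain ⟨hc0img, hc0not⟩ := Finset.mem_sdiff.mp hc0mem
      obtain ⟨i0, hi0r, hi0eq⟩ := Finset.mem_image.mp hc0img
      have hi0 : i0 < k := Finset.mem_range.mp hi0r
      have hc0nonneg : 0 ≤ c0 := hi0eq ▸ feas_nonneg G v hs hi0
      have hc0pos : 0 < c0 :=
        lt_of_le_of_ne hc0nonneg fun h => hc0not (by rw [← h]; exact zero_mem_CSF G v hk)
      have hc0le : c0 ≤ 1 - ellPlus G v k k := hi0eq ▸ feas_le_top G v hs hi0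
      have hc0lt : c0 < 1 - ellPlus G v k k :=
        lt_of_le_of_ne hc0le fun h => hc0not (by rw [h]; exact top_mem_CSF G v hk)
      classical
      set X := (Finset.range k).image s with hX
      set lo := (insert (0:ℝ) (X.filter fun x => x < c0)).max' ⟨0, Finset.mem_insert_self _ _⟩
        with hlo
      set hi := (insert (1 - ellPlus G v k k) (X.filter fun x => c0 < x)).min'
        ⟨_, Finset.mem_insert_self _ _⟩ with hhi
      have hlo_nonneg : (0:ℝ) ≤ lo := Finset.le_max' _ 0 (Finset.mem_insert_self _ _)
      have hlo_lt : lo < c0 := by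
        have hmem : lo ∈ insert (0:ℝ) (X.filter fun x => x < c0) := Finset.max'_mem _ _
        rcases Finset.mem_insert.mp hmem with h | h
        · rw [h]; exact hc0pos
        · exact (Finset.mem_filter.mp h).2
      have hhi_gt : c0 < hi := by
        have hmem : hi ∈ insert (1 - ellPlus G v k k) (X.filter fun x => c0 < x) :=
          Finset.min'_mem _ _
        rcases Finset.mem_insert.mp hmem with h | h
        · rw [h]; exact hc0lt
        · exact (Finset.mem_filter.mp h).2
      have hhi_top : hi ≤ 1 - ellPlus G v k k := Finset.min'_le _ _ (Finset.mem_insert_self _ _)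
      have hlo_ge : ∀ j, j < k → s j < c0 → s j ≤ lo := by
        intro j hj h
        rw [hlo]
        apply Finset.le_max'
        apply Finset.mem_insert_of_mem
        rw [Finset.mem_filter]
        exact ⟨Finset.mem_image_of_mem s (Finset.mem_range.2 hj), h⟩
      have hhi_le : ∀ j, j < k → c0 < s j → hi ≤ s j := by
        intro j hj h
        rw [hhi]
        apply Finset.min'_le
        apply Finset.mem_insert_of_mem
        rw [Finset.mem_filter]
        exact ⟨Finset.mem_image_of_mem s (Finset.mem_range.2 hj), h⟩
      set D := insert lo (insert hi ((CSF G v k).filter fun x => lo ≤ x ∧ x ≤ hi)) with hD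
      have hloD : lo ∈ D := Finset.mem_insert_self _ _
      have hhiD : hi ∈ D := Finset.mem_insert_of_mem (Finset.mem_insert_self _ _)
      have hloDf : lo ∈ D.filter fun x => x ≤ c0 := by
        rw [Finset.mem_filter]; exact ⟨hloD, hlo_lt.le⟩
      have hhiDf : hi ∈ D.filter fun x => c0 ≤ x := by
        rw [Finset.mem_filter]; exact ⟨hhiD, hhi_gt.le⟩
      have hd1ne : (D.filter fun x => x ≤ c0).Nonempty := ⟨lo, hloDf⟩
      have hd2ne : (D.filter fun x => c0 ≤ x).Nonempty := ⟨hi, hhiDf⟩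
      set d1 := (D.filter fun x => x ≤ c0).max' hd1ne with hd1def
      set d2 := (D.filter fun x => c0 ≤ x).min' hd2ne with hd2def
      have hd1mem : d1 ∈ D ∧ d1 ≤ c0 := Finset.mem_filter.mp (Finset.max'_mem _ hd1ne)
      have hd2mem : d2 ∈ D ∧ c0 ≤ d2 := Finset.mem_filter.mp (Finset.min'_mem _ hd2ne)
      have hd1lo : lo ≤ d1 := by
        rw [hd1def]; exact Finset.le_max' _ _ hloDf
      have hd2hi : d2 ≤ hi := by
        rw [hd2def]; exact Finset.min'_le _ _ hhiDf
      have hd12 : d1 ≤ d2 := hd1mem.2.trans hd2mem.2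
      have hsep : ∀ x ∈ CSF G v k, x ∉ Set.Ioo d1 d2 := by
        rintro x hx ⟨hx1, hx2⟩
        have hxD : x ∈ D := by
          apply Finset.mem_insert_of_mem
          apply Finset.mem_insert_of_mem
          rw [Finset.mem_filter]
          exact ⟨hx, hd1lo.trans hx1.le, hx2.le.trans hd2hi⟩
        rcases le_or_gt x c0 with h | h
        · refine absurd ?_ (not_le.2 hx1)
          rw [hd1def]
          refine Finset.le_max' _ x ?_
          rw [Finset.mem_filter]
          exact ⟨hxD, h⟩
        · refine absurd ?_ (not_le.2 hx2)
          rw [hd2def]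
          refine Finset.min'_le _ x ?_
          rw [Finset.mem_filter]
          exact ⟨hxD, h.le⟩
      set sm : ℝ → ℕ → ℝ := fun d i => if s i = c0 then d else s i with hsm
      have hfeas : ∀ d, lo ≤ d → d ≤ hi → Feas G v k (sm d) := by
        intro d hdlo hdhi
        refine ⟨?_, ?_, ?_⟩
        · simp only [hsm]
          by_cases h : s 0 = c0
          · rw [if_pos h]; linarith
          · rw [if_neg h]; exact hs.1
        · intro i hi2
          have hik : i < k := by omega
          have hik1 : i + 1 < k := by omega
          simp only [hsm]
          by_cases h1 : s i = c0 <;> by_cases h2 : s (i + 1) = c0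
          · rw [if_pos h1, if_pos h2]
          · rw [if_pos h1, if_neg h2]
            have hlt : c0 < s (i + 1) := lt_of_le_of_ne (h1 ▸ hs.2.1 i hi2) (Ne.symm h2)
            exact hdhi.trans (hhi_le _ hik1 hlt)
          · rw [if_neg h1, if_pos h2]
            have hlt : s i < c0 := lt_of_le_of_ne (h2 ▸ hs.2.1 i hi2) h1
            exact (hlo_ge _ hik hlt).trans hdlo
          · rw [if_neg h1, if_neg h2]; exact hs.2.1 i hi2
        · simp only [hsm]
          by_cases h : s (k - 1) = c0
          · rw [if_pos h]; exact hdhi.trans hhi_top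
          · rw [if_neg h]; exact hs.2.2
      have hsmc0 : sm c0 = s := by
        funext i
        simp only [hsm]
        split_ifs with h
        · exact h.symm
        · rfl
      have hcard' : ∀ d ∈ D, (((Finset.range k).image (sm d)) \ CSF G v k).card ≤ n := by
        intro d hdD
        have hdok : d ∈ CSF G v k ∨ (d ∈ X ∧ d ≠ c0) := by
          rcases Finset.mem_insert.mp hdD with h | h
          · have hmem : lo ∈ insert (0:ℝ) (X.filter fun x => x < c0) := Finset.max'_mem _ _
            rcases Finset.mem_insert.mp hmem with h0 | h0
            · left; rw [h, h0]; exact zero_mem_CSF G v hk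
            · right; rw [h]
              exact ⟨(Finset.mem_filter.mp h0).1, ne_of_lt (Finset.mem_filter.mp h0).2⟩
          · rcases Finset.mem_insert.mp h with h' | h'
            · have hmem : hi ∈ insert (1 - ellPlus G v k k) (X.filter fun x => c0 < x) :=
                Finset.min'_mem _ _
              rcases Finset.mem_insert.mp hmem with h0 | h0
              · left; rw [h', h0]; exact top_mem_CSF G v hk
              · right; rw [h']
                exact ⟨(Finset.mem_filter.mp h0).1, (ne_of_lt (Finset.mem_filter.mp h0).2).symm⟩
            · left; exact (Finset.mem_filter.mp h').1
        have hsub : ((Finset.range k).image (sm d)) \ CSF G v k ⊆ (X \ CSF G v k).erase c0 := by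
          intro y hy
          obtain ⟨hy1, hy2⟩ := Finset.mem_sdiff.mp hy
          obtain ⟨j, hjr, hjeq⟩ := Finset.mem_image.mp hy1
          by_cases h : s j = c0
          · have hyd : y = d := by rw [← hjeq]; simp only [hsm]; rw [if_pos h]
            rcases hdok with hcsf | ⟨hX', hne⟩
            · exact absurd (by rw [hyd]; exact hcsf) hy2
            · exact Finset.mem_erase.2 ⟨by rw [hyd]; exact hne,
                Finset.mem_sdiff.2 ⟨by rw [hyd]; exact hX', hy2⟩⟩
          · have hyeq : y = s j := by rw [← hjeq]; simp only [hsm]; rw [if_neg h]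
            exact Finset.mem_erase.2 ⟨by rw [hyeq]; exact h, Finset.mem_sdiff.2
              ⟨by rw [hyeq]; exact Finset.mem_image_of_mem s hjr, hy2⟩⟩
        have hc0in : c0 ∈ X \ CSF G v k := hc0mem
        calc (((Finset.range k).image (sm d)) \ CSF G v k).card
            ≤ ((X \ CSF G v k).erase c0).card := Finset.card_le_card hsub
          _ = (X \ CSF G v k).card - 1 := Finset.card_erase_of_mem hc0in
          _ ≤ n := by omega
      have hFeq : ∀ d, RW G v k (sm d) =
          ∑ m ∈ Finset.range (k + 1), ∑ p ∈ G.I (v m),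
            max (min (if m = k then 1 else ellPlus G v k m + sm d m) p.2 -
              max (if m = 0 then 0 else ellPlus G v k (m - 1) + sm d (m - 1)) p.1) 0 := by
        intro d
        simp only [RW, profReward, vReward_eq]
      have hconv : ConvexOn ℝ (Set.Icc d1 d2) (fun d => RW G v k (sm d)) := by
        refine convexOn_congrOn (convex_Icc d1 d2) (fun d _ => hFeq d) ?_
        refine convexOn_finset_sum (convex_Icc d1 d2) _ _ (fun m hm => ?_)
        refine convexOn_finset_sum (convex_Icc d1 d2) _ _ (fun p hp => ?_)
        have hm' : m ≤ k := by have := Finset.mem_range.mp hm; omega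
        have hup : ∃ A B : ℝ, ∀ d ∈ Set.Icc d1 d2,
            min (if m = k then 1 else ellPlus G v k m + sm d m) p.2 = A * d + B := by
          by_cases hmk : m = k
          · exact ⟨0, min 1 p.2, fun d _ => by rw [if_pos hmk, zero_mul, zero_add]⟩
          · by_cases hc : s m = c0
            · have hmlt : m < k := lt_of_le_of_ne hm' hmk
              have hβ : p.2 - ellPlus G v k m ∉ Set.Ioo d1 d2 :=
                hsep _ (mem_CSF_T1 G v hmlt (GI_subset_augI G v k m hp))
              obtain ⟨A, B, hAB⟩ := min_aff hd12 hβ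
              refine ⟨A, B, fun d hd => ?_⟩
              rw [if_neg hmk]
              have heq : ellPlus G v k m + sm d m = d + ellPlus G v k m := by
                simp only [hsm]; rw [if_pos hc]; ring
              rw [heq]; exact hAB d hd
            · refine ⟨0, min (ellPlus G v k m + s m) p.2, fun d _ => ?_⟩
              rw [if_neg hmk, zero_mul, zero_add]
              congr 2
              simp only [hsm]; rw [if_neg hc]
        have hlow : ∃ A B : ℝ, ∀ d ∈ Set.Icc d1 d2,
            max (if m = 0 then 0 else ellPlus G v k (m - 1) + sm d (m - 1)) p.1 = A * d + B := by
          by_cases hm0 : m = 0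
          · exact ⟨0, max 0 p.1, fun d _ => by rw [if_pos hm0, zero_mul, zero_add]⟩
          · by_cases hc : s (m - 1) = c0
            · have h1m : 1 ≤ m := by omega
              have hβ : p.1 - ellPlus G v k (m - 1) ∉ Set.Ioo d1 d2 :=
                hsep _ (mem_CSF_T2 G v h1m hm' (GI_subset_augI G v k m hp))
              obtain ⟨A, B, hAB⟩ := max_aff hd12 hβ
              refine ⟨A, B, fun d hd => ?_⟩
              rw [if_neg hm0]
              have heq : ellPlus G v k (m - 1) + sm d (m - 1) = d + ellPlus G v k (m - 1) := by
                simp only [hsm]; rw [if_pos hc]; ring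
              rw [heq]; exact hAB d hd
            · refine ⟨0, max (ellPlus G v k (m - 1) + s (m - 1)) p.1, fun d _ => ?_⟩
              rw [if_neg hm0, zero_mul, zero_add]
              congr 2
              simp only [hsm]; rw [if_neg hc]
        obtain ⟨A, B, hA⟩ := hup
        obtain ⟨A', B', hA'⟩ := hlow
        refine convexOn_congrOn (convex_Icc d1 d2) (fun d hd => ?_)
          (convexOn_affine_max0 (convex_Icc d1 d2) (A - A') (B - B'))
        rw [hA d hd, hA' d hd]
        congr 1
        ring
      have hle : RW G v k (sm c0) ≤ max (RW G v k (sm d1)) (RW G v k (sm d2)) :=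
        convexOn_Icc_le_max hconv hd1mem.2 hd2mem.2
      rw [hsmc0] at hle
      rcases le_max_iff.mp hle with hpick | hpick
      · obtain ⟨s', h1, h2, h3⟩ := ih (sm d1) (hfeas d1 hd1lo (hd1mem.2.trans hhi_gt.le))
          (hcard' d1 hd1mem.1)
        exact ⟨s', h1, h2, hpick.trans h3⟩
      · obtain ⟨s', h1, h2, h3⟩ := ih (sm d2) (hfeas d2 (hlo_lt.le.trans hd2mem.2) hd2hi)
          (hcard' d2 hd2mem.1)
        exact ⟨s', h1, h2, hpick.trans h3⟩

end Main

/-- **Theorem 1.** For any path `π = ⟨v_0, …, v_k⟩` (k ≥ 1) with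
`ℓ_π(v_k) ≤ 1`, there exists an optimal timing profile all of whose timestamps
are vertex-critical times. -/
theorem stmt3 {V : Type} (G : TAI V) (v : ℕ → V) (k : ℕ) (hk : 1 ≤ k)
    (hpath : IsPath G v k) (hlen : pathLen G v k ≤ 1) :
    ∃ T : ℕ → ℝ, IsTP G v k T ∧ (∀ i, i < k → T i ∈ ctVert G v k i) ∧
      ∀ T' : ℕ → ℝ, IsTP G v k T' → profReward G v k T' ≤ profReward G v k T := by
  classical
  set toS : (Fin k → ℝ) → (ℕ → ℝ) := fun f i => if h : i < k then f ⟨i, h⟩ else 0 with htoS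
  set Cand := (Fintype.piFinset fun _ : Fin k => CSF G v k).filter
    (fun f => Feas G v k (toS f)) with hCand
  have hf0 : (fun _ : Fin k => (0:ℝ)) ∈ Cand := by
    rw [hCand, Finset.mem_filter]
    refine ⟨Fintype.mem_piFinset.2 fun a => zero_mem_CSF G v hk, ?_⟩
    have hz : ∀ i, toS (fun _ => (0:ℝ)) i = 0 := by
      intro i; simp only [htoS]; split_ifs <;> rfl
    refine ⟨by rw [hz], fun i hi => by rw [hz, hz], ?_⟩
    rw [hz, ellPlus_top]
    linarith
  obtain ⟨fh, hfhmem, hmax⟩ := Finset.exists_max_image Cand (fun f => RW G v k (toS f)) ⟨_, hf0⟩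
  rw [hCand, Finset.mem_filter] at hfhmem
  obtain ⟨hfhpi, hfhfeas⟩ := hfhmem
  refine ⟨fun i => ellPlus G v k i + toS fh i, isTP_of_feas G v hfhfeas, ?_, ?_⟩
  · intro i hi
    have heq : toS fh i = fh ⟨i, hi⟩ := by simp only [htoS]; rw [dif_pos hi]
    show ellPlus G v k i + toS fh i ∈ ctVert G v k i
    rw [heq]
    exact crit_of_CSF G v (Fintype.mem_piFinset.mp hfhpi ⟨i, hi⟩) hi
  · intro T' hT'
    have hfeas' := feas_of_isTP G v hk hT'
    obtain ⟨s', hs'f, hs'mem, hs'le⟩ := main_move G v hk _ _ hfeas' le_rfl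
    have h1 : RW G v k (fun i => T' i - ellPlus G v k i) = profReward G v k T' := by
      unfold RW
      congr 1
      funext i
      ring
    set f' : Fin k → ℝ := fun a => s' a.1 with hf'
    have hf'pi : f' ∈ Fintype.piFinset fun _ : Fin k => CSF G v k :=
      Fintype.mem_piFinset.2 fun a => hs'mem a.1 a.isLt
    have hagree : ∀ i, i < k → toS f' i = s' i := by
      intro i hi
      simp only [htoS, hf']
      rw [dif_pos hi]
    have hfeq : Feas G v k (toS f') := by
      refine ⟨?_, ?_, ?_⟩
      · rw [hagree 0 (by omega)]; exact hs'f.1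
      · intro i hi
        rw [hagree i (by omega), hagree (i + 1) (by omega)]
        exact hs'f.2.1 i hi
      · rw [hagree (k - 1) (by omega)]; exact hs'f.2.2
    have hcand : f' ∈ Cand := by
      rw [hCand, Finset.mem_filter]; exact ⟨hf'pi, hfeq⟩
    have hRWeq : RW G v k (toS f') = RW G v k s' := RW_congr G v k hagree
    have hmax' := hmax f' hcand
    calc profReward G v k T' = RW G v k (fun i => T' i - ellPlus G v k i) := h1.symm
      _ ≤ RW G v k s' := hs'le
      _ = RW G v k (toS f') := hRWeq.symm
      _ ≤ RW G v k (toS fh) := hmax'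
      _ = profReward G v k (fun i => ellPlus G v k i + toS fh i) := rfl
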